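/- Let H be a real Hilbert space, X a measurable space, μ a measure on X, and K : X → H a strongly measurable map with ∫ ‖K x‖² dμ(x) < ∞; define T f = ∫ ⟪K x, f⟫ K x dμ(x). Fix λ > 0 and g ∈ H, and define J(f) = ∫ ⟪f − g, K x⟫² dμ(x) + λ‖f‖². Then f̂ ∈ H is a minimizer of J over H if and only if T(f̂ − g) + λ f̂ = 0, i.e., (T + λ·Id) f̂ = T g; in that case f̂ − g = −λ (T + λ·Id)⁻¹ g. -/

import Mathlib

open MeasureTheory

theorem stmt_8 {H X : Type*} [NormedAddCommGroup H] [InnerProductSpace ℝ H] [CompleteSpace H]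
    [MeasurableSpace X] (μ : Measure X) (K : X → H)
    (hK : StronglyMeasurable K)
    (hK2 : Integrable (fun x => ‖K x‖ ^ 2) μ)
    (T : H → H)
    (hT : ∀ f : H, T f = ∫ x, (inner ℝ (K x) f : ℝ) • K x ∂μ)
    (lam : ℝ) (hlam : 0 < lam) (g : H)
    (J : H → ℝ)
    (hJ : ∀ f : H, J f = ∫ x, (inner ℝ (f - g) (K x) : ℝ) ^ 2 ∂μ + lam * ‖f‖ ^ 2)
    (fhat : H) :
    ((∀ f : H, J fhat ≤ J f) ↔ T (fhat - g) + lam • fhat = 0) ∧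
    ((∀ f : H, J fhat ≤ J f) →
      (T fhat + lam • fhat = T g ∧
        ∀ u : H, T u + lam • u = -(lam • g) → u = fhat - g)) := by
  -- integrability of products of inner ℝ products
  have hint : ∀ u v : H,
      Integrable (fun x => (inner ℝ u (K x) : ℝ) * (inner ℝ v (K x) : ℝ)) μ := by
    intro u v
    have hm : AEStronglyMeasurable (fun x => (inner ℝ u (K x) : ℝ) * (inner ℝ v (K x) : ℝ)) μ :=
      ((stronglyMeasurable_const.inner hK).mul (stronglyMeasurable_const.inner hK)).aestronglyMeasurable
    refine (hK2.const_mul (‖u‖ * ‖v‖)).mono' hm (Filter.Eventually.of_forall fun x => ?_)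
    have h1 := abs_real_inner_le_norm u (K x)
    have h2 := abs_real_inner_le_norm v (K x)
    rw [Real.norm_eq_abs, abs_mul]
    have hn := norm_nonneg (K x)
    have hu := norm_nonneg u
    have hv := norm_nonneg v
    nlinarith [abs_nonneg (inner ℝ u (K x) : ℝ), abs_nonneg (inner ℝ v (K x) : ℝ)]
  have hsq : ∀ u : H, Integrable (fun x => (inner ℝ u (K x) : ℝ) ^ 2) μ := by
    intro u
    have := hint u u
    simpa [sq] using this
  -- Bochner integrability
  have hintB : ∀ u : H, Integrable (fun x => (inner ℝ (K x) u : ℝ) • K x) μ := by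
    intro u
    have hm : AEStronglyMeasurable (fun x => (inner ℝ (K x) u : ℝ) • K x) μ :=
      ((hK.inner stronglyMeasurable_const).smul hK).aestronglyMeasurable
    refine (hK2.const_mul ‖u‖).mono' hm (Filter.Eventually.of_forall fun x => ?_)
    rw [norm_smul, Real.norm_eq_abs]
    have h1 := abs_real_inner_le_norm (K x) u
    have hn := norm_nonneg (K x)
    nlinarith [abs_nonneg (inner ℝ (K x) u : ℝ)]
  -- inner ℝ product with T
  have hTip : ∀ u h : H, (inner ℝ h (T u) : ℝ)
      = ∫ x, (inner ℝ u (K x) : ℝ) * (inner ℝ h (K x) : ℝ) ∂μ := by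
    intro u h
    rw [hT, ← integral_inner (hintB u) h]
    congr 1
    ext x
    rw [real_inner_smul_right, real_inner_comm (K x) u]
  -- linearity of T for subtraction
  have hTsub : ∀ u v : H, T (u - v) = T u - T v := by
    intro u v
    rw [hT, hT, hT, ← integral_sub (hintB u) (hintB v)]
    congr 1
    ext x
    rw [inner_sub_right, sub_smul]
  -- the "gradient"
  set E : H := T (fhat - g) + lam • fhat with hE
  -- key expansion of J
  have hexp : ∀ h : H, J (fhat + h)
      = J fhat + 2 * (inner ℝ h E : ℝ)
        + ((∫ x, (inner ℝ h (K x) : ℝ) ^ 2 ∂μ) + lam * ‖h‖ ^ 2) := by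
    intro h
    have hinner : (inner ℝ h E : ℝ)
        = (∫ x, (inner ℝ (fhat - g) (K x) : ℝ) * (inner ℝ h (K x) : ℝ) ∂μ)
          + lam * (inner ℝ fhat h : ℝ) := by
      rw [hE, inner_add_right, hTip, real_inner_smul_right, real_inner_comm h fhat]
    rw [hJ, hJ, hinner]
    have key : (fun x => (inner ℝ (fhat + h - g) (K x) : ℝ) ^ 2)
        = fun x => (inner ℝ (fhat - g) (K x) : ℝ) ^ 2
            + (2 * ((inner ℝ (fhat - g) (K x) : ℝ) * (inner ℝ h (K x) : ℝ))
            + (inner ℝ h (K x) : ℝ) ^ 2) := by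
      ext x
      have h1 : (inner ℝ (fhat + h - g) (K x) : ℝ)
          = (inner ℝ (fhat - g) (K x) : ℝ) + (inner ℝ h (K x) : ℝ) := by
        rw [← inner_add_left]
        congr 1
        abel
      rw [h1]; ring
    have hi2 : Integrable (fun x => 2 * ((inner ℝ (fhat - g) (K x) : ℝ) * (inner ℝ h (K x) : ℝ))
        + (inner ℝ h (K x) : ℝ) ^ 2) μ := ((hint (fhat - g) h).const_mul 2).add (hsq h)
    rw [key, integral_add (hsq (fhat - g)) hi2,
      integral_add ((hint (fhat - g) h).const_mul 2) (hsq h), integral_const_mul]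
    have hns : ‖fhat + h‖ ^ 2 = ‖fhat‖ ^ 2 + 2 * (inner ℝ fhat h : ℝ) + ‖h‖ ^ 2 :=
      norm_add_sq_real fhat h
    rw [hns]
    ring
  -- nonnegativity of the quadratic part
  have hQpos : ∀ h : H,
      0 ≤ (∫ x, (inner ℝ h (K x) : ℝ) ^ 2 ∂μ) + lam * ‖h‖ ^ 2 := by
    intro h
    have h1 : 0 ≤ ∫ x, (inner ℝ h (K x) : ℝ) ^ 2 ∂μ :=
      integral_nonneg fun x => sq_nonneg _
    nlinarith [sq_nonneg ‖h‖, norm_nonneg h]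
  have main : (∀ f : H, J fhat ≤ J f) ↔ E = 0 := by
    constructor
    · intro hmin
      by_contra hne
      set q : ℝ := (∫ x, (inner ℝ E (K x) : ℝ) ^ 2 ∂μ) + lam * ‖E‖ ^ 2 with hq
      have hq0 : 0 ≤ q := hQpos E
      set t : ℝ := -‖E‖ ^ 2 / (q + 1) with ht
      have := hmin (fhat + t • E)
      rw [hexp (t • E)] at this
      have hiE : (inner ℝ (t • E) E : ℝ) = t * ‖E‖ ^ 2 := by
        rw [real_inner_smul_left, real_inner_self_eq_norm_sq]
      have hqE : (∫ x, (inner ℝ (t • E) (K x) : ℝ) ^ 2 ∂μ) + lam * ‖t • E‖ ^ 2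
          = t ^ 2 * q := by
        have h1 : (fun x => (inner ℝ (t • E) (K x) : ℝ) ^ 2)
            = fun x => t ^ 2 * (inner ℝ E (K x) : ℝ) ^ 2 := by
          ext x
          rw [real_inner_smul_left]; ring
        rw [h1, integral_const_mul, norm_smul, Real.norm_eq_abs, mul_pow, sq_abs, hq]
        ring
      rw [hiE, hqE] at this
      have hB : 0 < ‖E‖ ^ 2 := pow_pos (norm_pos_iff.mpr hne) 2
      have hq1 : (0:ℝ) < q + 1 := by linarith
      have h0 : 0 ≤ 2 * (t * ‖E‖ ^ 2) + t ^ 2 * q := by linarith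
      have ht' : t * (q + 1) = -‖E‖ ^ 2 := by
        rw [ht]; field_simp
      have heq : 2 * (t * ‖E‖ ^ 2) + t ^ 2 * q = -(t ^ 2 * (q + 2)) := by
        have : ‖E‖ ^ 2 = -(t * (q + 1)) := by linarith
        rw [this]; ring
      have ht2 : t ^ 2 ≤ 0 := by nlinarith
      have ht0 : t = 0 := by nlinarith [sq_nonneg t]
      rw [ht0] at ht'
      simp only [zero_mul] at ht'
      nlinarith
    · intro hzero f
      have := hexp (f - fhat)
      rw [show fhat + (f - fhat) = f by abel, hzero, inner_zero_right] at this
      have := hQpos (f - fhat)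
      linarith [hexp (f - fhat)]
  constructor
  · exact main
  · intro hmin
    have hE0 : E = 0 := main.mp hmin
    have hTfg : T fhat - T g + lam • fhat = 0 := by
      rw [← hTsub]; exact hE0
    constructor
    · have hsub : T fhat + lam • fhat - T g = 0 := by
        rw [show T fhat + lam • fhat - T g = T fhat - T g + lam • fhat from by abel, hTfg]
      exact sub_eq_zero.mp hsub
    · intro u hu
      have hw : T (fhat - g) + lam • (fhat - g) = -(lam • g) := by
        have h1 : T (fhat - g) + lam • fhat = 0 := hE0
        rw [smul_sub]
        calc T (fhat - g) + (lam • fhat - lam • g)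
            = (T (fhat - g) + lam • fhat) - lam • g := by abel
          _ = -(lam • g) := by rw [h1]; abel
      set d : H := u - (fhat - g) with hd
      have hTd : T d + lam • d = 0 := by
        rw [hd, hTsub, smul_sub]
        calc T u - T (fhat - g) + (lam • u - lam • (fhat - g))
            = (T u + lam • u) - (T (fhat - g) + lam • (fhat - g)) := by abel
          _ = -(lam • g) - -(lam • g) := by rw [hu, hw]
          _ = 0 := by abel
      have hip : (inner ℝ d (T d + lam • d) : ℝ) = 0 := by rw [hTd, inner_zero_right]
      rw [inner_add_right, hTip, real_inner_smul_right, real_inner_self_eq_norm_sq] at hip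
      have h1 : (∫ x, (inner ℝ d (K x) : ℝ) * (inner ℝ d (K x) : ℝ) ∂μ) ≥ 0 :=
        integral_nonneg fun x => mul_self_nonneg _
      have hd0 : ‖d‖ ^ 2 ≤ 0 := by nlinarith
      have : d = 0 := by
        have : ‖d‖ = 0 := by nlinarith [norm_nonneg d, sq_nonneg ‖d‖]
        exact norm_eq_zero.mp this
      exact sub_eq_zero.mp this
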